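/- A function f ∈ H²_ω is H²_ω-inner if and only if ‖f‖ = 1 and for every integer k ≥ 1 there exists a constant C_k such that ‖f·(z^k + λ)‖² ≤ C_k + |λ|² for all λ ∈ ℂ. -/

import Mathlib

noncomputable section
open Complex Filter

namespace WHS

/-- Membership in the weighted Hardy space: the coefficient sequence `a` satisfies
`∑ ω n * |a n|^2 < ∞`. -/
def memH (ω : ℕ → ℝ) (a : ℕ → ℂ) : Prop :=
  Summable fun n => ω n * ‖a n‖ ^ 2

/-- The squared norm `‖f‖²` in the weighted Hardy space. -/
def wNorm2 (ω : ℕ → ℝ) (a : ℕ → ℂ) : ℝ := ∑' n, ω n * ‖a n‖ ^ 2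

/-- The inner product `⟨f, g⟩ = ∑ ω n * a n * conj (b n)` (linear in the first argument). -/
def wInner (ω : ℕ → ℝ) (a b : ℕ → ℂ) : ℂ :=
  ∑' n, (ω n : ℂ) * a n * (starRingEnd ℂ) (b n)

/-- Coefficients of `z^m * f`. -/
def shift (m : ℕ) (a : ℕ → ℂ) : ℕ → ℂ := fun n => if m ≤ n then a (n - m) else 0

/-- Coefficients of `p * f` for a polynomial `p`. -/
def polyMul (p : Polynomial ℂ) (a : ℕ → ℂ) : ℕ → ℂ :=
  fun n => ∑ j ∈ Finset.range (n + 1), p.coeff j * a (n - j)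

/-- Coefficients of the product of power series with coefficients `b` and `a`. -/
def conv (b a : ℕ → ℂ) : ℕ → ℂ :=
  fun n => ∑ j ∈ Finset.range (n + 1), b j * a (n - j)

/-- `f` is an `H²_ω`-inner function: `f ∈ H²_ω`, `‖f‖ = 1` and `⟨z^m f, f⟩ = 0` for all `m ≥ 1`. -/
def IsInner (ω : ℕ → ℝ) (a : ℕ → ℂ) : Prop :=
  memH ω a ∧ wNorm2 ω a = 1 ∧ ∀ m : ℕ, 1 ≤ m → wInner ω (shift m a) a = 0

end WHS

namespace WHS

variable {ω : ℕ → ℝ} {f a b : ℕ → ℂ}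

lemma ratio_bound (hpos : ∀ n, 0 < ω n)
    (hlim : Tendsto (fun n => ω (n + 1) / ω n) atTop (nhds 1)) :
    ∃ M : ℝ, 1 ≤ M ∧ ∀ k n, ω (n + k) ≤ M ^ k * ω n := by
  obtain ⟨B, hB⟩ := hlim.bddAbove_range
  refine ⟨max B 1, le_max_right _ _, ?_⟩
  intro k
  induction k with
  | zero => intro n; simp
  | succ k ih =>
    intro n
    have h1 : ω (n + k + 1) / ω (n + k) ≤ max B 1 :=
      le_max_of_le_left (hB (Set.mem_range_self (n + k)))
    have h2 : ω (n + k + 1) ≤ max B 1 * ω (n + k) := by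
      rw [div_le_iff₀ (hpos (n + k))] at h1; linarith
    have h3 : ω (n + k) ≤ max B 1 ^ k * ω n := ih n
    have hM0 : (0:ℝ) < max B 1 := lt_of_lt_of_le one_pos (le_max_right _ _)
    calc ω (n + (k + 1)) = ω (n + k + 1) := rfl
      _ ≤ max B 1 * ω (n + k) := h2
      _ ≤ max B 1 * (max B 1 ^ k * ω n) := by
          exact mul_le_mul_of_nonneg_left h3 hM0.le
      _ = max B 1 ^ (k + 1) * ω n := by ring

lemma memH_shift (hpos : ∀ n, 0 < ω n)
    (hlim : Tendsto (fun n => ω (n + 1) / ω n) atTop (nhds 1))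
    (hf : memH ω f) (k : ℕ) : memH ω (shift k f) := by
  obtain ⟨M, hM1, hM⟩ := ratio_bound hpos hlim
  unfold memH
  apply (summable_nat_add_iff k).mp
  have heq : ∀ n, ω (n + k) * ‖shift k f (n + k)‖ ^ 2 = ω (n + k) * ‖f n‖ ^ 2 := by
    intro n
    unfold shift
    simp [Nat.le_add_left]
  apply Summable.congr _ (fun n => (heq n).symm)
  apply Summable.of_nonneg_of_le (fun n => mul_nonneg (hpos _).le (sq_nonneg _)) (fun n => ?_) (hf.mul_left (M ^ k))
  calc ω (n + k) * ‖f n‖ ^ 2 ≤ (M ^ k * ω n) * ‖f n‖ ^ 2 :=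
        mul_le_mul_of_nonneg_right (hM k n) (by positivity)
    _ = M ^ k * (ω n * ‖f n‖ ^ 2) := by ring

lemma summable_inner (hpos : ∀ n, 0 < ω n) (ha : memH ω a) (hb : memH ω b) :
    Summable fun n => (ω n : ℂ) * a n * (starRingEnd ℂ) (b n) := by
  apply Summable.of_norm
  apply Summable.of_nonneg_of_le (fun n => norm_nonneg _) (fun n => ?_)
    ((ha.add hb).mul_left (1/2 : ℝ))
  have h1 : ‖(ω n : ℂ) * a n * (starRingEnd ℂ) (b n)‖ = |ω n| * ‖a n‖ * ‖b n‖ := by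
    simp [norm_mul]
  rw [h1, abs_of_pos (hpos n)]
  have h2 : ‖a n‖ * ‖b n‖ ≤ (‖a n‖ ^ 2 + ‖b n‖ ^ 2) / 2 := by
    nlinarith [sq_nonneg (‖a n‖ - ‖b n‖)]
  have h3 := (hpos n).le
  nlinarith [norm_nonneg (a n), norm_nonneg (b n)]

lemma wNorm2_expand (hpos : ∀ n, 0 < ω n) (ha : memH ω a) (hb : memH ω b) (lam : ℂ) :
    wNorm2 ω (fun n => a n + lam * b n)
      = wNorm2 ω a + 2 * ((starRingEnd ℂ) lam * wInner ω a b).re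
        + ‖lam‖ ^ 2 * wNorm2 ω b := by
  set t : ℕ → ℂ := fun n => (ω n : ℂ) * a n * (starRingEnd ℂ) (b n) with ht
  have hsum : Summable t := summable_inner hpos ha hb
  have hsum2 : Summable fun n => (starRingEnd ℂ) lam * t n := hsum.mul_left _
  have hsumre : Summable fun n => ((starRingEnd ℂ) lam * t n).re :=
    hsum2.map Complex.reCLM Complex.reCLM.continuous
  have hsumre2 : Summable fun n => 2 * ((starRingEnd ℂ) lam * t n).re := hsumre.mul_left 2
  have key : ∀ n, ω n * ‖a n + lam * b n‖ ^ 2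
      = ω n * ‖a n‖ ^ 2 + 2 * ((starRingEnd ℂ) lam * t n).re
        + ‖lam‖ ^ 2 * (ω n * ‖b n‖ ^ 2) := by
    intro n
    have hre : ((starRingEnd ℂ) lam * t n).re
        = ω n * (a n * ((starRingEnd ℂ) lam * (starRingEnd ℂ) (b n))).re := by
      have e : (starRingEnd ℂ) lam * t n
          = (ω n : ℂ) * (a n * ((starRingEnd ℂ) lam * (starRingEnd ℂ) (b n))) := by
        rw [ht]; ring
      rw [e, Complex.re_ofReal_mul]
    rw [hre]
    rw [Complex.sq_norm, Complex.sq_norm,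
      Complex.sq_norm, Complex.sq_norm,
      Complex.normSq_add, Complex.normSq_mul]
    have e2 : (a n * (starRingEnd ℂ) (lam * b n)).re
        = (a n * ((starRingEnd ℂ) lam * (starRingEnd ℂ) (b n))).re := by
      rw [map_mul]
    rw [e2]; ring
  calc wNorm2 ω (fun n => a n + lam * b n)
      = ∑' n, (ω n * ‖a n‖ ^ 2 + 2 * ((starRingEnd ℂ) lam * t n).re
          + ‖lam‖ ^ 2 * (ω n * ‖b n‖ ^ 2)) := tsum_congr key
    _ = (∑' n, ω n * ‖a n‖ ^ 2) + (∑' n, 2 * ((starRingEnd ℂ) lam * t n).re)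
          + (∑' n, ‖lam‖ ^ 2 * (ω n * ‖b n‖ ^ 2)) := by
        rw [Summable.tsum_add (ha.add hsumre2) (hb.mul_left _), Summable.tsum_add ha hsumre2]
    _ = wNorm2 ω a + 2 * ((starRingEnd ℂ) lam * wInner ω a b).re + ‖lam‖ ^ 2 * wNorm2 ω b := by
        congr 1
        · congr 1
          rw [tsum_mul_left]
          congr 1
          have h1 : ∑' n, ((starRingEnd ℂ) lam * t n).re
              = (∑' n, (starRingEnd ℂ) lam * t n).re := by
            rw [← Complex.reCLM_apply, Complex.reCLM.map_tsum hsum2]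
            simp
          rw [h1, tsum_mul_left]; rfl
        · rw [tsum_mul_left]; rfl

end WHS


/-- `f ∈ H²_ω` is inner iff `‖f‖ = 1` and for every `k ≥ 1` there is a
constant `C_k` with `‖f·(z^k + λ)‖² ≤ C_k + |λ|²` for all `λ ∈ ℂ`. -/
theorem stmt6 (ω : ℕ → ℝ) (hpos : ∀ n, 0 < ω n) (hω0 : ω 0 = 1)
    (hlim : Filter.Tendsto (fun n => ω (n + 1) / ω n) Filter.atTop (nhds 1))
    (f : ℕ → ℂ) (hf : WHS.memH ω f) :
    WHS.IsInner ω f ↔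
      (WHS.wNorm2 ω f = 1 ∧ ∀ k : ℕ, 1 ≤ k → ∃ C : ℝ, ∀ lam : ℂ,
        WHS.wNorm2 ω (fun n => WHS.shift k f n + lam * f n) ≤ C + ‖lam‖ ^ 2) := by
  unfold WHS.IsInner
  constructor
  · rintro ⟨-, hn, hin⟩
    refine ⟨hn, fun k hk => ?_⟩
    have hsh := WHS.memH_shift hpos hlim hf k
    refine ⟨WHS.wNorm2 ω (WHS.shift k f), fun lam => ?_⟩
    rw [WHS.wNorm2_expand hpos hsh hf lam, hin k hk, hn]
    simp
  · rintro ⟨hn, hC⟩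
    refine ⟨hf, hn, fun m hm => ?_⟩
    obtain ⟨C, hC⟩ := hC m hm
    have hsh := WHS.memH_shift hpos hlim hf m
    set c := WHS.wInner ω (WHS.shift m f) f with hc
    set W := WHS.wNorm2 ω (WHS.shift m f) with hW
    have hexp : ∀ lam : ℂ, W + 2 * ((starRingEnd ℂ) lam * c).re + ‖lam‖ ^ 2 ≤ C + ‖lam‖ ^ 2 := by
      intro lam
      have := hC lam
      rw [WHS.wNorm2_expand hpos hsh hf lam, hn] at this
      linarith [this]
    have key : ∀ t : ℝ, 2 * (t * ‖c‖ ^ 2) ≤ C - W := by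
      intro t
      have h := hexp ((t : ℂ) * c)
      have hre : ((starRingEnd ℂ) ((t : ℂ) * c) * c).re = t * ‖c‖ ^ 2 := by
        rw [map_mul, Complex.conj_ofReal]
        have : (t : ℂ) * (starRingEnd ℂ) c * c = (t : ℂ) * ((Complex.normSq c : ℝ) : ℂ) := by
          rw [mul_assoc, mul_comm ((starRingEnd ℂ) c) c, Complex.mul_conj]
        rw [this, ← Complex.ofReal_mul, Complex.ofReal_re, Complex.normSq_eq_norm_sq]
      rw [hre] at h
      linarith
    have h0 : ‖c‖ ^ 2 ≤ 0 := by
      by_contra h'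
      push_neg at h'
      have hne : ‖c‖ ^ 2 ≠ 0 := ne_of_gt h'
      have ht := key ((|C - W| + 1) / (2 * ‖c‖ ^ 2))
      have he : 2 * ((|C - W| + 1) / (2 * ‖c‖ ^ 2) * ‖c‖ ^ 2) = |C - W| + 1 := by
        have hne' : ‖c‖ ≠ 0 := fun h0 => hne (by rw [h0]; norm_num)
        field_simp
      rw [he] at ht
      have := le_abs_self (C - W)
      linarith
    have : ‖c‖ = 0 := by nlinarith [norm_nonneg c, sq_nonneg ‖c‖]
    exact norm_eq_zero.mp this
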